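/- Let λ, μ ∈ ℝ with μ > 0 and 3λ + 2μ > 0. There exists a constant c > 0, depending only on λ and μ, such that for all x, y in the closed lower half-space {x₃ ≤ 0} with x ≠ y, every entry of the Neumann function satisfies |N_{ij}(x,y)| ≤ c/|x − y|, i = j = 1,2,3. -/

import Mathlib

open MeasureTheory Metric Set

noncomputable section

abbrev E3 := EuclideanSpace ℝ (Fin 3)

/-- Partial derivative of a scalar field in the k-th coordinate direction. -/
def pd (f : E3 → ℝ) (k : Fin 3) (x : E3) : ℝ := fderiv ℝ f x (EuclideanSpace.single k 1)

/-- Kronecker delta. -/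
def kd (i j : Fin 3) : ℝ := if i = j then 1 else 0

/-- Kelvin–Somigliana fundamental matrix `Γ` of the Lamé operator
(with `ν = λ/(2(λ+μ))`, `C_{μ,ν} = 1/(16πμ(1−ν))`). -/
def KelvinG (lam mu : ℝ) (x : E3) : Matrix (Fin 3) (Fin 3) ℝ :=
  let ν := lam / (2 * (lam + mu))
  let Cmn := 1 / (16 * Real.pi * mu * (1 - ν))
  fun i j => -Cmn * ((3 - 4*ν) * kd i j / ‖x‖ + x i * x j / ‖x‖^3)

/-- The matrix `R¹` in the decomposition of the Neumann function
(with `c_ν = 4(1−ν)(1−2ν)`, `f̃(η) = 1/|η|`, `g̃(η) = 1/(|η| − η₃)`). -/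
def Rmat1 (lam mu : ℝ) (η : E3) : Matrix (Fin 3) (Fin 3) ℝ :=
  let ν := lam / (2 * (lam + mu))
  let Cmn := 1 / (16 * Real.pi * mu * (1 - ν))
  let cν := 4 * (1 - ν) * (1 - 2*ν)
  let f := 1 / ‖η‖
  let g := 1 / (‖η‖ - η 2)
  fun i j => Cmn * ( -(f + cν * g) * kd i j - (3 - 4*ν) * η i * η j * f^3
    + cν * (kd i 2 * η j - kd j 2 * (1 - kd i 2) * η i) * f * g
    + cν * (1 - kd i 2) * (1 - kd j 2) * η i * η j * f * g^2 )

/-- The matrix `R²` in the decomposition of the Neumann function. -/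
def Rmat2 (lam mu : ℝ) (η : E3) : Matrix (Fin 3) (Fin 3) ℝ :=
  let ν := lam / (2 * (lam + mu))
  let Cmn := 1 / (16 * Real.pi * mu * (1 - ν))
  let f := 1 / ‖η‖
  fun i j => 2 * Cmn *
    ( (3 - 4*ν) * (kd i 2 * (1 - kd j 2) * η j + kd j 2 * (1 - kd i 2) * η i) * f^3
      - (1 - 2 * kd j 2) * kd i j * η 2 * f^3
      + 3 * (1 - 2 * kd j 2) * η i * η j * η 2 * f^5 )

/-- The matrix `R³` in the decomposition of the Neumann function. -/
def Rmat3 (lam mu : ℝ) (η : E3) : Matrix (Fin 3) (Fin 3) ℝ :=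
  let ν := lam / (2 * (lam + mu))
  let Cmn := 1 / (16 * Real.pi * mu * (1 - ν))
  let f := 1 / ‖η‖
  fun i j => 2 * Cmn * (1 - 2 * kd j 2) * (kd i j * f^3 - 3 * η i * η j * f^5)

/-- Reflection across the boundary plane: `ỹ = (y₁, y₂, −y₃)`. -/
def refl3 (y : E3) : E3 := y - (2 * y 2) • EuclideanSpace.single 2 1

/-- Neumann function of the Lamé operator in the half-space:
`N(x,y) = Γ(x−y) + R¹(x−ỹ) + y₃ R²(x−ỹ) + y₃² R³(x−ỹ)`. -/
def NeumannN (lam mu : ℝ) (x y : E3) : Matrix (Fin 3) (Fin 3) ℝ :=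
  fun i j => KelvinG lam mu (x - y) i j + Rmat1 lam mu (x - refl3 y) i j
    + y 2 * Rmat2 lam mu (x - refl3 y) i j + (y 2)^2 * Rmat3 lam mu (x - refl3 y) i j

/-- auxiliary abbreviations for the constants appearing in the Neumann function. -/
def νv (lam mu : ℝ) : ℝ := lam / (2 * (lam + mu))
def Cmv (lam mu : ℝ) : ℝ := 1 / (16 * Real.pi * mu * (1 - νv lam mu))
def cνv (lam mu : ℝ) : ℝ := 4 * (1 - νv lam mu) * (1 - 2*(νv lam mu))

lemma coord_le (v : E3) (i : Fin 3) : |v i| ≤ ‖v‖ := by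
  have h : v i = inner ℝ (EuclideanSpace.single i (1:ℝ)) v := by
    rw [EuclideanSpace.inner_single_left]; simp
  rw [h]
  calc |inner ℝ (EuclideanSpace.single i (1:ℝ)) v| ≤ ‖EuclideanSpace.single i (1:ℝ)‖ * ‖v‖ :=
        abs_real_inner_le_norm _ _
    _ = ‖v‖ := by rw [EuclideanSpace.norm_single]; simp

lemma abs_kd_le (i j : Fin 3) : |kd i j| ≤ 1 := by unfold kd; split <;> simp
lemma abs_one_sub_kd_le (i j : Fin 3) : |1 - kd i j| ≤ 1 := by unfold kd; split <;> simp
lemma abs_one_sub_two_kd_le (i j : Fin 3) : |1 - 2*kd i j| ≤ 1 := by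
  unfold kd; split <;> simp; norm_num
lemma abs_mul_le {a b A B : ℝ} (ha : |a| ≤ A) (hb : |b| ≤ B) : |a*b| ≤ A*B := by
  rw [abs_mul]; exact mul_le_mul ha hb (abs_nonneg _) ((abs_nonneg a).trans ha)
lemma abs_sub' (a b : ℝ) : |a - b| ≤ |a| + |b| := by
  rw [sub_eq_add_neg]; exact (abs_add_le _ _).trans (by rw [abs_neg])
lemma abs_add3 (a b c : ℝ) : |a+b+c| ≤ |a|+|b|+|c| := by
  have h1 := abs_add_le (a+b) c
  have h2 := abs_add_le a b
  linarith
lemma abs_add4 (a b c d : ℝ) : |a+b+c+d| ≤ |a|+|b|+|c|+|d| := by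
  have h1 := abs_add_le (a+b+c) d
  have h2 := abs_add_le (a+b) c
  have h3 := abs_add_le a b
  linarith

lemma kelvinG_eq (lam mu : ℝ) (z : E3) (i j : Fin 3) :
    KelvinG lam mu z i j = -(Cmv lam mu) * ((3 - 4*νv lam mu) * kd i j / ‖z‖ + z i * z j / ‖z‖^3) := rfl

lemma kelvin_bound (lam mu : ℝ) (z : E3) (hz : z ≠ 0) (i j : Fin 3) :
    |KelvinG lam mu z i j| ≤ (|Cmv lam mu| * (|3 - 4*νv lam mu| + 1)) / ‖z‖ := by
  have hB : (0:ℝ) < ‖z‖ := norm_pos_iff.mpr hz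
  have hi := coord_le z i
  have hj := coord_le z j
  rw [kelvinG_eq, abs_mul, abs_neg]
  have h1 : |(3 - 4*νv lam mu) * kd i j / ‖z‖| ≤ |3 - 4*νv lam mu| / ‖z‖ := by
    rw [abs_div, abs_of_pos hB]
    exact (div_le_div_iff_of_pos_right hB).mpr
      (by simpa using abs_mul_le (le_refl |3 - 4*νv lam mu|) (abs_kd_le i j))
  have h2 : |z i * z j / ‖z‖^3| ≤ 1 / ‖z‖ := by
    rw [abs_div, abs_pow, abs_of_pos hB, div_le_div_iff₀ (by positivity) hB]
    have := abs_mul_le hi hj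
    nlinarith
  calc |Cmv lam mu| * |(3 - 4*νv lam mu) * kd i j / ‖z‖ + z i * z j / ‖z‖^3|
      ≤ |Cmv lam mu| * (|3 - 4*νv lam mu| / ‖z‖ + 1 / ‖z‖) := by
        apply mul_le_mul_of_nonneg_left _ (abs_nonneg _)
        exact (abs_add_le _ _).trans (add_le_add h1 h2)
    _ = (|Cmv lam mu| * (|3 - 4*νv lam mu| + 1)) / ‖z‖ := by ring

lemma rmat1_eq (lam mu : ℝ) (η : E3) (i j : Fin 3) :
    Rmat1 lam mu η i j = Cmv lam mu *
      ( -(1/‖η‖ + cνv lam mu * (1/(‖η‖ - η 2))) * kd i j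
        - (3 - 4*νv lam mu) * η i * η j * (1/‖η‖)^3
        + cνv lam mu * (kd i 2 * η j - kd j 2 * (1 - kd i 2) * η i) * (1/‖η‖) * (1/(‖η‖ - η 2))
        + cνv lam mu * (1 - kd i 2) * (1 - kd j 2) * η i * η j * (1/‖η‖) * (1/(‖η‖ - η 2))^2 ) := rfl

lemma rmat1_bound (lam mu : ℝ) (η : E3) (hη : η ≠ 0) (h2 : η 2 ≤ 0) (i j : Fin 3) :
    |Rmat1 lam mu η i j| ≤
      (|Cmv lam mu| * (1 + |3 - 4*νv lam mu| + 4 * |cνv lam mu|)) / ‖η‖ := by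
  have hB : (0:ℝ) < ‖η‖ := norm_pos_iff.mpr hη
  set B := ‖η‖ with hBdef
  set cν := cνv lam mu
  set ν3 := |3 - 4*νv lam mu| with hν3
  have hi := coord_le η i
  have hj := coord_le η j
  have hg0 : (0:ℝ) < B - η 2 := by linarith
  have hg : |1/(B - η 2)| ≤ 1/B := by
    rw [abs_of_pos (by positivity)]
    exact one_div_le_one_div_of_le hB (by linarith)
  have hf : |1/B| ≤ 1/B := le_of_eq (abs_of_pos (by positivity))
  have hf3 : |(1/B)^3| ≤ (1/B)^3 := le_of_eq (abs_of_pos (by positivity))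
  have hg2 : |(1/(B - η 2))^2| ≤ (1/B)^2 := by
    rw [abs_pow]
    exact pow_le_pow_left₀ (abs_nonneg _) hg 2
  rw [rmat1_eq, abs_mul]
  have ht1 : |(-(1/B + cν * (1/(B - η 2))) * kd i j)| ≤ (1/B + |cν| * (1/B)) * 1 := by
    rw [neg_mul, abs_neg]
    exact abs_mul_le ((abs_add_le _ _).trans (add_le_add hf (abs_mul_le le_rfl hg))) (abs_kd_le i j)
  have ht2 : |(3 - 4*νv lam mu) * η i * η j * (1/B)^3| ≤ ν3 * B * B * (1/B)^3 :=
    abs_mul_le (abs_mul_le (abs_mul_le le_rfl hi) hj) hf3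
  have ht3 : |cν * (kd i 2 * η j - kd j 2 * (1 - kd i 2) * η i) * (1/B) * (1/(B - η 2))|
      ≤ |cν| * (1 * B + 1 * 1 * B) * (1/B) * (1/B) := by
    refine abs_mul_le (abs_mul_le (abs_mul_le le_rfl ?_) hf) hg
    exact (abs_sub' _ _).trans (add_le_add (abs_mul_le (abs_kd_le i 2) hj)
      (abs_mul_le (abs_mul_le (abs_kd_le j 2) (abs_one_sub_kd_le i 2)) hi))
  have ht4 : |cν * (1 - kd i 2) * (1 - kd j 2) * η i * η j * (1/B) * (1/(B - η 2))^2|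
      ≤ |cν| * 1 * 1 * B * B * (1/B) * (1/B)^2 :=
    abs_mul_le (abs_mul_le (abs_mul_le (abs_mul_le (abs_mul_le
      (abs_mul_le le_rfl (abs_one_sub_kd_le i 2)) (abs_one_sub_kd_le j 2)) hi) hj) hf) hg2
  have hsum := abs_add4 (-(1/B + cν * (1/(B - η 2))) * kd i j)
    (-((3 - 4*νv lam mu) * η i * η j * (1/B)^3))
    (cν * (kd i 2 * η j - kd j 2 * (1 - kd i 2) * η i) * (1/B) * (1/(B - η 2)))
    (cν * (1 - kd i 2) * (1 - kd j 2) * η i * η j * (1/B) * (1/(B - η 2))^2)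
  rw [abs_neg] at hsum
  have hre : -(1/B + cν * (1/(B - η 2))) * kd i j
        - (3 - 4*νv lam mu) * η i * η j * (1/B)^3
        + cν * (kd i 2 * η j - kd j 2 * (1 - kd i 2) * η i) * (1/B) * (1/(B - η 2))
        + cν * (1 - kd i 2) * (1 - kd j 2) * η i * η j * (1/B) * (1/(B - η 2))^2
      = -(1/B + cν * (1/(B - η 2))) * kd i j
        + (-((3 - 4*νv lam mu) * η i * η j * (1/B)^3))
        + cν * (kd i 2 * η j - kd j 2 * (1 - kd i 2) * η i) * (1/B) * (1/(B - η 2))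
        + cν * (1 - kd i 2) * (1 - kd j 2) * η i * η j * (1/B) * (1/(B - η 2))^2 := by ring
  rw [hre]
  calc |Cmv lam mu| * |_| ≤ |Cmv lam mu| *
      ((1/B + |cν| * (1/B)) * 1 + ν3 * B * B * (1/B)^3
        + |cν| * (1 * B + 1 * 1 * B) * (1/B) * (1/B) + |cν| * 1 * 1 * B * B * (1/B) * (1/B)^2) := by
        apply mul_le_mul_of_nonneg_left _ (abs_nonneg _)
        exact hsum.trans (by linarith)
    _ = (|Cmv lam mu| * (1 + ν3 + 4 * |cν|)) / B := by
        field_simp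
        ring

lemma rmat2_eq (lam mu : ℝ) (η : E3) (i j : Fin 3) :
    Rmat2 lam mu η i j = 2 * Cmv lam mu *
      ( (3 - 4*νv lam mu) * (kd i 2 * (1 - kd j 2) * η j + kd j 2 * (1 - kd i 2) * η i) * (1/‖η‖)^3
        - (1 - 2 * kd j 2) * kd i j * η 2 * (1/‖η‖)^3
        + 3 * (1 - 2 * kd j 2) * η i * η j * η 2 * (1/‖η‖)^5 ) := rfl

lemma rmat2_bound (lam mu : ℝ) (η : E3) (hη : η ≠ 0) (i j : Fin 3) :
    |Rmat2 lam mu η i j| ≤ (2 * |Cmv lam mu| * (2 * |3 - 4*νv lam mu| + 4)) / ‖η‖^2 := by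
  have hB : (0:ℝ) < ‖η‖ := norm_pos_iff.mpr hη
  set B := ‖η‖ with hBdef
  set ν3 := |3 - 4*νv lam mu| with hν3
  have hi := coord_le η i
  have hj := coord_le η j
  have h2 := coord_le η 2
  have hf3 : |(1/B)^3| ≤ (1/B)^3 := le_of_eq (abs_of_pos (by positivity))
  have hf5 : |(1/B)^5| ≤ (1/B)^5 := le_of_eq (abs_of_pos (by positivity))
  rw [rmat2_eq, abs_mul]
  have ht1 : |(3 - 4*νv lam mu) * (kd i 2 * (1 - kd j 2) * η j + kd j 2 * (1 - kd i 2) * η i) * (1/B)^3|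
      ≤ ν3 * (1 * 1 * B + 1 * 1 * B) * (1/B)^3 := by
    refine abs_mul_le (abs_mul_le le_rfl ?_) hf3
    exact (abs_add_le _ _).trans (add_le_add
      (abs_mul_le (abs_mul_le (abs_kd_le i 2) (abs_one_sub_kd_le j 2)) hj)
      (abs_mul_le (abs_mul_le (abs_kd_le j 2) (abs_one_sub_kd_le i 2)) hi))
  have ht2 : |(1 - 2 * kd j 2) * kd i j * η 2 * (1/B)^3| ≤ 1 * 1 * B * (1/B)^3 :=
    abs_mul_le (abs_mul_le (abs_mul_le (abs_one_sub_two_kd_le j 2) (abs_kd_le i j)) h2) hf3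
  have ht3 : |3 * (1 - 2 * kd j 2) * η i * η j * η 2 * (1/B)^5|
      ≤ 3 * 1 * B * B * B * (1/B)^5 := by
    refine abs_mul_le (abs_mul_le (abs_mul_le (abs_mul_le (abs_mul_le ?_ (abs_one_sub_two_kd_le j 2)) hi) hj) h2) hf5
    rw [abs_of_pos] <;> norm_num
  have hsum := abs_add3
    ((3 - 4*νv lam mu) * (kd i 2 * (1 - kd j 2) * η j + kd j 2 * (1 - kd i 2) * η i) * (1/B)^3)
    (-((1 - 2 * kd j 2) * kd i j * η 2 * (1/B)^3))
    (3 * (1 - 2 * kd j 2) * η i * η j * η 2 * (1/B)^5)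
  rw [abs_neg] at hsum
  have hre : (3 - 4*νv lam mu) * (kd i 2 * (1 - kd j 2) * η j + kd j 2 * (1 - kd i 2) * η i) * (1/B)^3
        - (1 - 2 * kd j 2) * kd i j * η 2 * (1/B)^3
        + 3 * (1 - 2 * kd j 2) * η i * η j * η 2 * (1/B)^5
      = (3 - 4*νv lam mu) * (kd i 2 * (1 - kd j 2) * η j + kd j 2 * (1 - kd i 2) * η i) * (1/B)^3
        + (-((1 - 2 * kd j 2) * kd i j * η 2 * (1/B)^3))
        + 3 * (1 - 2 * kd j 2) * η i * η j * η 2 * (1/B)^5 := by ring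
  rw [hre]
  calc |2 * Cmv lam mu| * |_|
      ≤ |2 * Cmv lam mu| * (ν3 * (1 * 1 * B + 1 * 1 * B) * (1/B)^3 + 1 * 1 * B * (1/B)^3
          + 3 * 1 * B * B * B * (1/B)^5) := by
        apply mul_le_mul_of_nonneg_left _ (abs_nonneg _)
        exact hsum.trans (by linarith)
    _ = (2 * |Cmv lam mu| * (2 * ν3 + 4)) / B^2 := by
        rw [abs_mul, abs_of_pos (by norm_num : (0:ℝ) < 2)]
        field_simp
        ring

lemma rmat3_eq (lam mu : ℝ) (η : E3) (i j : Fin 3) :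
    Rmat3 lam mu η i j = 2 * Cmv lam mu * (1 - 2 * kd j 2) *
      (kd i j * (1/‖η‖)^3 - 3 * η i * η j * (1/‖η‖)^5) := rfl

lemma rmat3_bound (lam mu : ℝ) (η : E3) (hη : η ≠ 0) (i j : Fin 3) :
    |Rmat3 lam mu η i j| ≤ (8 * |Cmv lam mu|) / ‖η‖^3 := by
  have hB : (0:ℝ) < ‖η‖ := norm_pos_iff.mpr hη
  set B := ‖η‖ with hBdef
  have hi := coord_le η i
  have hj := coord_le η j
  have hf3 : |(1/B)^3| ≤ (1/B)^3 := le_of_eq (abs_of_pos (by positivity))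
  have hf5 : |(1/B)^5| ≤ (1/B)^5 := le_of_eq (abs_of_pos (by positivity))
  rw [rmat3_eq]
  have h3 : |(3:ℝ)| ≤ 3 := by rw [abs_of_pos] <;> norm_num
  have hmain : |kd i j * (1/B)^3 - 3 * η i * η j * (1/B)^5|
      ≤ 1 * (1/B)^3 + 3 * B * B * (1/B)^5 :=
    (abs_sub' _ _).trans (add_le_add (abs_mul_le (abs_kd_le i j) hf3)
      (abs_mul_le (abs_mul_le (abs_mul_le h3 hi) hj) hf5))
  have houter : |2 * Cmv lam mu * (1 - 2 * kd j 2)| ≤ 2 * |Cmv lam mu| * 1 := by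
    refine abs_mul_le ?_ (abs_one_sub_two_kd_le j 2)
    rw [abs_mul, abs_of_pos (by norm_num : (0:ℝ) < 2)]
  calc |2 * Cmv lam mu * (1 - 2 * kd j 2) * (kd i j * (1/B)^3 - 3 * η i * η j * (1/B)^5)|
      ≤ (2 * |Cmv lam mu| * 1) * (1 * (1/B)^3 + 3 * B * B * (1/B)^5) := abs_mul_le houter hmain
    _ = (8 * |Cmv lam mu|) / B^3 := by field_simp; ring

lemma refl3_apply2 (y : E3) : refl3 y 2 = - y 2 := by
  simp [refl3, EuclideanSpace.single_apply]; ring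
lemma refl3_apply0 (y : E3) : refl3 y 0 = y 0 := by
  simp [refl3, EuclideanSpace.single_apply]
lemma refl3_apply1 (y : E3) : refl3 y 1 = y 1 := by
  simp [refl3, EuclideanSpace.single_apply]

lemma norm_sub_le_norm_sub_refl (x y : E3) (hx : x 2 ≤ 0) (hy : y 2 ≤ 0) :
    ‖x - y‖ ≤ ‖x - refl3 y‖ := by
  rw [EuclideanSpace.norm_eq, EuclideanSpace.norm_eq]
  apply Real.sqrt_le_sqrt
  simp only [Fin.sum_univ_three, PiLp.sub_apply, refl3_apply0, refl3_apply1, refl3_apply2,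
    Real.norm_eq_abs, sq_abs]
  nlinarith [mul_nonneg (neg_nonneg.mpr hx) (neg_nonneg.mpr hy)]

/-- Pointwise decay estimate for the Neumann function: `|N_{ij}(x,y)| ≤ c/|x−y|` for all
`x ≠ y` in the closed lower half-space. -/
theorem neumann_pointwise_bound (lam mu : ℝ) (hmu : 0 < mu) (hlam : 0 < 3*lam + 2*mu) :
    ∃ c : ℝ, 0 < c ∧ ∀ x y : E3, x 2 ≤ 0 → y 2 ≤ 0 → x ≠ y →
      ∀ i j : Fin 3, |NeumannN lam mu x y i j| ≤ c / ‖x - y‖ := by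
  set ν3 := |3 - 4*νv lam mu| with hν3
  set Cm := |Cmv lam mu| with hCm
  set cA := |cνv lam mu| with hcA
  have hν3n : 0 ≤ ν3 := abs_nonneg _
  have hCmn : 0 ≤ Cm := abs_nonneg _
  have hcAn : 0 ≤ cA := abs_nonneg _
  set K0 := Cm * (ν3 + 1) with hK0
  set K1 := Cm * (1 + ν3 + 4 * cA) with hK1
  set K2 := 2 * Cm * (2 * ν3 + 4) with hK2
  set K3 := 8 * Cm with hK3
  have hK0n : 0 ≤ K0 := by positivity
  have hK1n : 0 ≤ K1 := by positivity
  have hK2n : 0 ≤ K2 := by positivity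
  have hK3n : 0 ≤ K3 := by positivity
  refine ⟨K0 + K1 + K2 + K3 + 1, by linarith, ?_⟩
  intro x y hx hy hxy i j
  have hA : (0:ℝ) < ‖x - y‖ := norm_sub_pos_iff.mpr hxy
  set A := ‖x - y‖ with hAdef
  set η := x - refl3 y with hηdef
  have hBA : A ≤ ‖η‖ := norm_sub_le_norm_sub_refl x y hx hy
  have hB : (0:ℝ) < ‖η‖ := lt_of_lt_of_le hA hBA
  have hηne : η ≠ 0 := norm_pos_iff.mp hB
  set B := ‖η‖ with hBdef
  have hη2 : η 2 = x 2 + y 2 := by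
    rw [hηdef]
    simp only [PiLp.sub_apply, refl3_apply2]
    ring
  have hη2le : η 2 ≤ 0 := by rw [hη2]; linarith
  have hy2B : |y 2| ≤ B := by
    have h1 : |y 2| ≤ |η 2| := by
      rw [hη2, abs_of_nonpos hy, abs_of_nonpos (by linarith : x 2 + y 2 ≤ 0)]
      linarith
    exact h1.trans (coord_le η 2)
  have hG : |KelvinG lam mu (x - y) i j| ≤ K0 / A := by
    have := kelvin_bound lam mu (x - y) (sub_ne_zero.mpr hxy) i j
    simpa [hK0, hCm, hν3, add_comm] using this
  have hR1 : |Rmat1 lam mu η i j| ≤ K1 / B := rmat1_bound lam mu η hηne hη2le i j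
  have hR2 : |Rmat2 lam mu η i j| ≤ K2 / B^2 := rmat2_bound lam mu η hηne i j
  have hR3 : |Rmat3 lam mu η i j| ≤ K3 / B^3 := rmat3_bound lam mu η hηne i j
  have hT2 : |y 2 * Rmat2 lam mu η i j| ≤ K2 / B := by
    have h := abs_mul_le hy2B hR2
    have heq : B * (K2 / B^2) = K2 / B := by field_simp
    exact h.trans_eq heq
  have hT3 : |(y 2)^2 * Rmat3 lam mu η i j| ≤ K3 / B := by
    have hsq : |(y 2)^2| ≤ B^2 := by
      rw [abs_pow]; exact pow_le_pow_left₀ (abs_nonneg _) hy2B 2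
    have h := abs_mul_le hsq hR3
    have heq : B^2 * (K3 / B^3) = K3 / B := by field_simp
    exact h.trans_eq heq
  have hNeq : NeumannN lam mu x y i j
      = KelvinG lam mu (x - y) i j + Rmat1 lam mu η i j
        + y 2 * Rmat2 lam mu η i j + (y 2)^2 * Rmat3 lam mu η i j := rfl
  have habs : |NeumannN lam mu x y i j|
      ≤ |KelvinG lam mu (x - y) i j| + |Rmat1 lam mu η i j|
        + |y 2 * Rmat2 lam mu η i j| + |(y 2)^2 * Rmat3 lam mu η i j| := by
    rw [hNeq]; exact abs_add4 _ _ _ _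
  have hdiv : ∀ K : ℝ, 0 ≤ K → K / B ≤ K / A := by
    intro K hK
    rw [div_le_div_iff₀ hB hA]
    nlinarith
  have h1 := hdiv K1 hK1n
  have h2 := hdiv K2 hK2n
  have h3 := hdiv K3 hK3n
  have hfinal : K0 / A + K1 / A + K2 / A + K3 / A ≤ (K0 + K1 + K2 + K3 + 1) / A := by
    rw [show K0 / A + K1 / A + K2 / A + K3 / A = (K0 + K1 + K2 + K3) / A by ring]
    exact (div_le_div_iff_of_pos_right hA).mpr (by linarith)
  linarith

end
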